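/- For every odd integer m ≥ 1, the set CBFS₂(2m+2) = {α·1·β·0 : α a Dyck word of length 2i, β a Dyck word of length 2(m−i), 0 ≤ i ≤ (m+1)/2} \ {1·α'·0·1·β'·0 : α', β' Dyck words of length m−1} is a cross-bifix-free set on BF₂(2m+2); that is, every word in CBFS₂(2m+2) is a bifix-free binary word of length 2m+2, and any two distinct words in CBFS₂(2m+2) are cross-bifix-free. -/

import Mathlib

/-- A binary word (as a list of Booleans, `true` = 1, `false` = 0) is a Dyck word
if it has as many 1s as 0s and every prefix has at least as many 1s as 0s. -/
def IsDyck (w : List Bool) : Prop :=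
  w.count true = w.count false ∧
  ∀ p : List Bool, p <+: w → p.count false ≤ p.count true

/-- `DyckLen w n` : `w` is a Dyck word of length `n`. -/
def DyckLen (w : List Bool) (n : ℕ) : Prop := IsDyck w ∧ w.length = n

/-- A word is bifix-free if no nonempty proper prefix of it is also a suffix of it. -/
def BifixFree {A : Type*} (w : List A) : Prop :=
  ∀ p : List A, p ≠ [] → p <+: w → p ≠ w → ¬ p <:+ w

/-- Two (distinct, same-length) words are cross-bifix-free if no nonempty proper
prefix of either one is a suffix of the other. -/
def CrossBifixFree {A : Type*} (w w' : List A) : Prop :=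
  (∀ p : List A, p ≠ [] → p <+: w → p ≠ w → ¬ p <:+ w') ∧
  (∀ p : List A, p ≠ [] → p <+: w' → p ≠ w' → ¬ p <:+ w)

/-- The set of bifix-free binary words of length `n`. -/
def BF (n : ℕ) : Set (List Bool) := {w | w.length = n ∧ BifixFree w}

/-- `CBFS₂(2m+1)` : words `1·α` where `α` is a Dyck word of length `2m`. -/
def CBFSodd (m : ℕ) : Set (List Bool) :=
  {w | ∃ α : List Bool, DyckLen α (2 * m) ∧ w = true :: α}

/-- `CBFS₂(2m+2)` for even `m > 1` : words `α·1·β·0` with `α` a Dyck word of length `2i`,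
`β` a Dyck word of length `2(m-i)`, `0 ≤ i ≤ m/2`. -/
def CBFSevenE (m : ℕ) : Set (List Bool) :=
  {w | ∃ (i : ℕ) (α β : List Bool), i ≤ m / 2 ∧ DyckLen α (2 * i) ∧
    DyckLen β (2 * (m - i)) ∧ w = α ++ true :: β ++ [false]}

/-- `CBFS₂(2m+2)` for odd `m ≥ 1` : words `α·1·β·0` with `α` a Dyck word of length `2i`,
`β` a Dyck word of length `2(m-i)`, `0 ≤ i ≤ (m+1)/2`, excluding the words
`1·α'·0·1·β'·0` with `α'`, `β'` Dyck words of length `m-1`. -/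
def CBFSevenO (m : ℕ) : Set (List Bool) :=
  {w | ∃ (i : ℕ) (α β : List Bool), i ≤ (m + 1) / 2 ∧ DyckLen α (2 * i) ∧
    DyckLen β (2 * (m - i)) ∧ w = α ++ true :: β ++ [false]} \
  {w | ∃ α' β' : List Bool, DyckLen α' (m - 1) ∧ DyckLen β' (m - 1) ∧
    w = true :: α' ++ false :: true :: β' ++ [false]}

/-- Dropping a balanced prefix of a Dyck word leaves a Dyck word. -/
lemma dyck_drop (q γ : List Bool) (h : IsDyck (q ++ γ))
    (hq : q.count true = q.count false) : IsDyck γ := by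
  obtain ⟨hbal, hpre⟩ := h
  constructor
  · have : (q ++ γ).count true = q.count true + γ.count true := List.count_append
    have : (q ++ γ).count false = q.count false + γ.count false := List.count_append
    omega
  · intro p hp
    have hqp : (q ++ p) <+: (q ++ γ) := by
      obtain ⟨t, rfl⟩ := hp
      exact ⟨t, by simp⟩
    have := hpre (q ++ p) hqp
    simp [List.count_append] at this
    omega

/-- Count facts for a prefix of `α ++ true :: β ++ [false]`. -/
lemma prefix_struct (α β : List Bool) (hα : IsDyck α) (hβ : IsDyck β)
    (q : List Bool) (hq : q <+: α ++ true :: β ++ [false]) :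
    q.count false ≤ q.count true ∧
    (q.count false = q.count true → q ≠ α ++ true :: β ++ [false] → q <+: α) := by
  by_cases hlen : q.length ≤ α.length
  · have hqα : q <+: α :=
      List.prefix_of_prefix_length_le hq ⟨true :: β ++ [false], by simp⟩ hlen
    exact ⟨hα.2 q hqα, fun _ _ => hqα⟩
  · have h1 : (α ++ [true]) <+: α ++ true :: β ++ [false] := ⟨β ++ [false], by simp⟩
    have h2 : (α ++ [true]) <+: q := by
      apply List.prefix_of_prefix_length_le h1 hq
      simp; omega
    obtain ⟨r, hr⟩ := h2
    have hrpre : r <+: β ++ [false] := by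
      obtain ⟨s, hs⟩ := hq
      rw [← hr] at hs
      refine ⟨s, ?_⟩
      have : α ++ [true] ++ (r ++ s) = α ++ [true] ++ (β ++ [false]) := by
        simpa using hs
      exact List.append_cancel_left this
    by_cases hrl : r.length ≤ β.length
    · have hrβ : r <+: β :=
        List.prefix_of_prefix_length_le hrpre ⟨[false], rfl⟩ hrl
      have hc := hβ.2 r hrβ
      have hcq : q.count false = α.count false + r.count false ∧
          q.count true = α.count true + 1 + r.count true := by
        subst hr; constructor <;> simp [List.count_append] <;> omega
      have := hα.1
      constructor
      · omega
      · intro he _; omega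
    · have hrall : r = β ++ [false] := by
        apply hrpre.eq_of_length
        have := hrpre.length_le
        simp only [List.length_append, List.length_cons, List.length_nil] at this ⊢
        omega
      have : q = α ++ true :: β ++ [false] := by
        subst hrall; rw [← hr]; simp
      subst this
      constructor
      · simp [List.count_append, hα.1, hβ.1] <;> omega
      · intro _ h; exact absurd rfl h

/-- Count facts for a nonempty suffix of `α ++ true :: β ++ [false]`. -/
lemma suffix_struct (α β : List Bool) (hα : IsDyck α) (hβ : IsDyck β)
    (p : List Bool) (hp : p <:+ α ++ true :: β ++ [false]) (hne : p ≠ []) :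
    p.count true ≤ p.count false ∧
    (p.count true = p.count false →
      ∃ γ : List Bool, IsDyck γ ∧ γ.length ≤ α.length ∧
        p = γ ++ true :: β ++ [false]) := by
  obtain ⟨q, hw⟩ := hp
  have hqpre : q <+: α ++ true :: β ++ [false] := ⟨p, hw⟩
  have hqne : q ≠ α ++ true :: β ++ [false] := by
    intro h
    have h2 : q ++ p = q ++ [] := by rw [hw, h, List.append_nil]
    exact hne (List.append_cancel_left h2)
  obtain ⟨hq1, hq2⟩ := prefix_struct α β hα hβ q hqpre
  have hct : q.count true + p.count true = (α ++ true :: β ++ [false]).count true := by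
    rw [← hw]; simp [List.count_append]
  have hcf : q.count false + p.count false = (α ++ true :: β ++ [false]).count false := by
    rw [← hw]; simp [List.count_append]
  have hbal : (α ++ true :: β ++ [false]).count true
      = (α ++ true :: β ++ [false]).count false := by
    simp [List.count_append, hα.1, hβ.1] <;> omega
  constructor
  · omega
  · intro he
    have hqbal : q.count false = q.count true := by omega
    have hqα : q <+: α := hq2 hqbal hqne
    obtain ⟨γ, hγ⟩ := hqα
    refine ⟨γ, dyck_drop q γ (hγ ▸ hα) hqbal.symm, ?_, ?_⟩
    · rw [← hγ]; simp
    · have : q ++ p = q ++ (γ ++ true :: β ++ [false]) := by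
        rw [hw, ← hγ]; simp
      exact List.append_cancel_left this

/-- The key lemma: a nonempty proper prefix of one set word which is a suffix of
another set word forces the first word to have the excluded shape. -/
lemma key (m i i' : ℕ) (hm : 1 ≤ m) (hmo : Odd m) (α β α' β' : List Bool)
    (hi : i ≤ (m + 1) / 2) (hi' : i' ≤ (m + 1) / 2)
    (hαd : IsDyck α) (hαl : α.length = 2 * i)
    (hβd : IsDyck β) (hβl : β.length = 2 * (m - i))
    (hα'd : IsDyck α') (hα'l : α'.length = 2 * i')
    (hβ'd : IsDyck β') (hβ'l : β'.length = 2 * (m - i'))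
    (p : List Bool) (hne : p ≠ [])
    (hpre : p <+: α ++ true :: β ++ [false])
    (hpw : p ≠ α ++ true :: β ++ [false])
    (hsuf : p <:+ α' ++ true :: β' ++ [false]) :
    ∃ γ δ : List Bool, DyckLen γ (m - 1) ∧ DyckLen δ (m - 1) ∧
      α ++ true :: β ++ [false] = true :: γ ++ false :: true :: δ ++ [false] := by
  obtain ⟨k, rfl⟩ := hmo
  obtain ⟨hp1, hp2⟩ := prefix_struct α β hαd hβd p hpre
  obtain ⟨hs1, hs2⟩ := suffix_struct α' β' hα'd hβ'd p hsuf hne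
  have hbal : p.count true = p.count false := by omega
  obtain ⟨γ, hγd, hγl, hγp⟩ := hs2 hbal
  have hpα : p <+: α := hp2 hbal.symm hpw
  have hplen : p.length = γ.length + β'.length + 2 := by
    rw [hγp]
    simp only [List.length_append, List.length_cons, List.length_nil]
    omega
  have hple : p.length ≤ α.length := hpα.length_le
  -- arithmetic: forces γ = [], 2i = m+1, 2i' = m+1
  clear hp2 hs2 hpre hpw hsuf hαd hα'd hne
  have hγ0 : γ.length = 0 := by omega
  have hβ'len : β'.length = 2 * k + 1 - 1 := by omega
  have hβlen : β.length = 2 * k + 1 - 1 := by omega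
  have hplα : p.length = α.length := by omega
  have hpeqα : p = α := hpα.eq_of_length hplα
  have hγnil : γ = [] := List.length_eq_zero_iff.mp hγ0
  subst hγnil
  simp only [List.nil_append] at hγp
  exact ⟨β', β, ⟨hβ'd, hβ'len⟩, ⟨hβd, hβlen⟩, by rw [← hpeqα, hγp]; simp⟩

/-- For every odd `m ≥ 1`, `CBFS₂(2m+2)` is a cross-bifix-free set
on `BF₂(2m+2)`. -/
theorem CBFSevenO_crossBifixFree (m : ℕ) (hm : 1 ≤ m) (hmo : Odd m) :
    (∀ w ∈ CBFSevenO m, w ∈ BF (2 * m + 2)) ∧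
    (∀ w ∈ CBFSevenO m, ∀ w' ∈ CBFSevenO m, w ≠ w' → CrossBifixFree w w') := by
  constructor
  · rintro w ⟨⟨i, α, β, hi, ⟨hαd, hαl⟩, ⟨hβd, hβl⟩, rfl⟩, hnot⟩
    refine ⟨?_, ?_⟩
    · simp only [List.length_append, List.length_cons, List.length_nil]
      obtain ⟨k, hk⟩ := hmo
      omega
    · intro p hne hpre hpne hsuf
      obtain ⟨γ, δ, h1, h2, h3⟩ := key m i i hm hmo α β α β hi hi hαd hαl hβd hβl
        hαd hαl hβd hβl p hne hpre hpne hsuf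
      exact hnot ⟨γ, δ, h1, h2, h3⟩
  · rintro w ⟨⟨i, α, β, hi, ⟨hαd, hαl⟩, ⟨hβd, hβl⟩, rfl⟩, hnot⟩
      w' ⟨⟨i', α', β', hi', ⟨hα'd, hα'l⟩, ⟨hβ'd, hβ'l⟩, rfl⟩, hnot'⟩ hneq
    constructor
    · intro p hne hpre hpne hsuf
      obtain ⟨γ, δ, h1, h2, h3⟩ := key m i i' hm hmo α β α' β' hi hi' hαd hαl hβd hβl
        hα'd hα'l hβ'd hβ'l p hne hpre hpne hsuf
      exact hnot ⟨γ, δ, h1, h2, h3⟩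
    · intro p hne hpre hpne hsuf
      obtain ⟨γ, δ, h1, h2, h3⟩ := key m i' i hm hmo α' β' α β hi' hi hα'd hα'l hβ'd hβ'l
        hαd hαl hβd hβl p hne hpre hpne hsuf
      exact hnot' ⟨γ, δ, h1, h2, h3⟩
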